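/- Convergence of a perturbed contraction (deterministic comparison lemma): Let v : ℕ → ℝ be nonnegative, let β : ℕ → ℝ with β(k) ∈ [0,1] for all k and ∑_{k=0}^∞ β(k) = ∞, and let ε : ℕ → ℝ be nonnegative. Suppose v(k+1) ≤ (1 − β(k))·v(k) + ε(k) for all k, and that there exists a sequence c(k) → 0 with ε(k) ≤ c(k)·β(k) for all k. Then lim_{k→∞} v(k) = 0. -/
import Mathlib


open Filter

/-- Convergence of a perturbed contraction (deterministic comparison lemma). -/
theorem perturbed_contraction_tendsto_zero (v β ε c : ℕ → ℝ)
    (hv : ∀ k, 0 ≤ v k)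
    (hβ : ∀ k, β k ∈ Set.Icc (0 : ℝ) 1)
    (hβdiv : Tendsto (fun n => ∑ k ∈ Finset.range n, β k) atTop atTop)
    (hε : ∀ k, 0 ≤ ε k)
    (hrec : ∀ k, v (k + 1) ≤ (1 - β k) * v k + ε k)
    (hc : Tendsto c atTop (nhds 0))
    (hεβ : ∀ k, ε k ≤ c k * β k) :
    Tendsto v atTop (nhds 0) := by
  rw [Metric.tendsto_atTop]
  intro δ hδ
  have hδ3 : (0:ℝ) < δ/3 := by linarith
  obtain ⟨N, hN⟩ := Metric.tendsto_atTop.1 hc (δ/3) hδ3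
  have hNc : ∀ k ≥ N, c k ≤ δ/3 := by
    intro k hk
    have := hN k hk
    rw [Real.dist_eq, sub_zero] at this
    exact le_of_lt (lt_of_abs_lt this)
  set P : ℕ → ℝ := fun n => ∏ i ∈ Finset.range n, (1 - β (N + i)) with hP
  have hP0 : ∀ n, 0 ≤ P n := by
    intro n
    apply Finset.prod_nonneg
    intro i _
    have := (hβ (N + i)).2
    linarith
  -- key inequality by induction
  have key : ∀ n, v (N + n) - δ/3 ≤ (v N - δ/3) * P n := by
    intro n
    induction n with
    | zero => simp [hP]
    | succ n ih =>
      have hb := hβ (N + n)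
      have h1 : v (N + n + 1) ≤ (1 - β (N+n)) * v (N+n) + (δ/3) * β (N+n) := by
        have h2 := hrec (N + n)
        have h3 := hεβ (N + n)
        have h4 := hNc (N + n) (Nat.le_add_right N n)
        nlinarith [hb.1]
      have h5 : v (N + n + 1) - δ/3 ≤ (1 - β (N+n)) * (v (N+n) - δ/3) := by
        nlinarith
      have h6 : (1 - β (N+n)) * (v (N+n) - δ/3) ≤ (1 - β (N+n)) * ((v N - δ/3) * P n) :=
        mul_le_mul_of_nonneg_left ih (by linarith [hb.2])
      have h7 : (1 - β (N+n)) * ((v N - δ/3) * P n) = (v N - δ/3) * P (n+1) := by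
        simp only [hP, Finset.prod_range_succ]
        ring
      calc v (N + (n+1)) - δ/3 = v (N + n + 1) - δ/3 := by ring_nf
        _ ≤ (1 - β (N+n)) * (v (N+n) - δ/3) := h5
        _ ≤ (v N - δ/3) * P (n+1) := h7 ▸ h6
  -- partial sums of shifted β tend to infinity
  have hS : Tendsto (fun n => ∑ i ∈ Finset.range n, β (N + i)) atTop atTop := by
    have hcomp : Tendsto (fun n => ∑ k ∈ Finset.range (n + N), β k) atTop atTop :=
      hβdiv.comp (tendsto_add_atTop_nat N)
    have h2 := tendsto_atTop_add_const_right atTop (-(∑ k ∈ Finset.range N, β k)) hcomp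
    refine h2.congr fun n => ?_
    rw [add_comm n N, Finset.sum_range_add]
    ring
  -- P bounded by exponential
  have hPle : ∀ n, P n ≤ Real.exp (-(∑ i ∈ Finset.range n, β (N + i))) := by
    intro n
    have hexp : Real.exp (-(∑ i ∈ Finset.range n, β (N + i)))
        = ∏ i ∈ Finset.range n, Real.exp (-(β (N + i))) := by
      rw [← Real.exp_sum, ← Finset.sum_neg_distrib]
    rw [hexp]
    apply Finset.prod_le_prod
    · intro i _
      have := (hβ (N + i)).2
      linarith
    · intro i _
      have := Real.add_one_le_exp (-(β (N + i)))
      linarith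
  -- P tends to 0
  have hPtend : Tendsto P atTop (nhds 0) := by
    apply squeeze_zero hP0 hPle
    exact Real.tendsto_exp_atBot.comp (tendsto_neg_atBot_iff.2 hS)
  have habs : Tendsto (fun n => |v N - δ/3| * P n) atTop (nhds 0) := by
    simpa using hPtend.const_mul |v N - δ/3|
  obtain ⟨M, hM⟩ := Metric.tendsto_atTop.1 habs (δ/3) hδ3
  refine ⟨N + M, fun k hk => ?_⟩
  have hkN : N ≤ k := le_trans (Nat.le_add_right N M) hk
  obtain ⟨n, rfl⟩ : ∃ n, k = N + n := ⟨k - N, (Nat.add_sub_cancel' hkN).symm⟩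
  have hnM : M ≤ n := by omega
  have hMn := hM n hnM
  rw [Real.dist_eq, sub_zero] at hMn
  have h8 : |v N - δ/3| * P n < δ/3 := lt_of_abs_lt hMn
  have h9 : (v N - δ/3) * P n ≤ |v N - δ/3| * P n :=
    mul_le_mul_of_nonneg_right (le_abs_self _) (hP0 n)
  have h10 := key n
  rw [Real.dist_eq, sub_zero, abs_of_nonneg (hv _)]
  linarith
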